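/- Let H = (V,E) be a hypergraph, x a fractional matching on H, and let g : E → ℝ satisfy g(e) ≥ 1 for all e ∈ E. Suppose that for every nonnegative weight function w : E → ℝ_{≥0} there exists a matching M of H with Σ_{e ∈ M} g(e)·w(e) ≥ Σ_{e ∈ E} w(e)·x(e). Then there exists a finitely supported probability distribution over matchings of H, i.e., matchings M_1, …, M_q with coefficients λ_1, …, λ_q ≥ 0 summing to 1, such that Σ_{i : e ∈ M_i} λ_i ≥ x(e)/g(e) for every e ∈ E. -/

import Mathlib

open Finset Pointwise

/-- Let `H = (V, E)` be a hypergraph, `x` a fractional matching,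
and `g : E → ℝ` with `g e ≥ 1`. Suppose for every nonnegative weight function
`w : E → ℝ≥0` there is a matching `M` with
`∑_{e ∈ M} g e * w e ≥ ∑_{e ∈ E} w e * x e`. Then there exists a finitely supported
probability distribution over matchings of `H` whose marginal on each edge `e ∈ E`
is at least `x e / g e`. -/
theorem distribution_from_weighted_matching_guarantee
    {α : Type*} [DecidableEq α] (V : Finset α) (E : Finset (Finset α))
    (hE : ∀ e ∈ E, e.Nonempty ∧ e ⊆ V)
    (x : Finset α → ℝ)
    (hx01 : ∀ e ∈ E, 0 ≤ x e ∧ x e ≤ 1)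
    (hxfrac : ∀ v ∈ V, ∑ e ∈ E.filter (fun e => v ∈ e), x e ≤ 1)
    (g : Finset α → ℝ) (hg : ∀ e ∈ E, 1 ≤ g e)
    (halg : ∀ w : Finset α → ℝ, (∀ e ∈ E, 0 ≤ w e) →
      ∃ M ⊆ E,
        (∀ e₁ ∈ M, ∀ e₂ ∈ M, e₁ ≠ e₂ → Disjoint e₁ e₂) ∧
        ∑ e ∈ E, w e * x e ≤ ∑ e ∈ M, g e * w e) :
    ∃ (q : ℕ) (M : Fin q → Finset (Finset α)) (lam : Fin q → ℝ),
      (∀ i, M i ⊆ E) ∧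
      (∀ i, ∀ e₁ ∈ M i, ∀ e₂ ∈ M i, e₁ ≠ e₂ → Disjoint e₁ e₂) ∧
      (∀ i, 0 ≤ lam i) ∧ (∑ i, lam i = 1) ∧
      (∀ e ∈ E, x e / g e ≤ ∑ i, if e ∈ M i then lam i else 0) := by
  classical
  have hgpos : ∀ e ∈ E, 0 < g e := fun e he => lt_of_lt_of_le one_pos (hg e he)
  -- the index type: edges of `E`
  let ι : Type _ := {e // e ∈ E}
  -- the finset of matchings
  let Match : Finset (Finset (Finset α)) :=
    E.powerset.filter (fun M => ∀ e₁ ∈ M, ∀ e₂ ∈ M, e₁ ≠ e₂ → Disjoint e₁ e₂)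
  have hMatch_sub : ∀ M ∈ Match, M ⊆ E := by
    intro M hM; exact Finset.mem_powerset.1 (Finset.mem_filter.1 hM).1
  have hMatch_match : ∀ M ∈ Match, ∀ e₁ ∈ M, ∀ e₂ ∈ M, e₁ ≠ e₂ → Disjoint e₁ e₂ :=
    fun M hM => (Finset.mem_filter.1 hM).2
  have hempty : (∅ : Finset (Finset α)) ∈ Match := by
    refine Finset.mem_filter.2 ⟨Finset.mem_powerset.2 (Finset.empty_subset _), ?_⟩
    intro e₁ h₁; exact absurd h₁ (Finset.notMem_empty _)
  -- indicator vectors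
  let ind : Finset (Finset α) → (ι → ℝ) := fun M e => if (e : Finset α) ∈ M then 1 else 0
  let T : Set (ι → ℝ) := ind '' ↑Match
  have hTfin : T.Finite := (Match.finite_toSet.image ind)
  let O : Set (ι → ℝ) := {z | ∀ e, z e ≤ 0}
  have hOclosed : IsClosed O := by
    have : O = ⋂ e, (fun z : ι → ℝ => z e) ⁻¹' Set.Iic 0 := by
      ext z; simp [O, Set.mem_iInter]
    rw [this]
    exact isClosed_iInter fun e => (isClosed_Iic).preimage (continuous_apply e)
  have hOconv : Convex ℝ O := by
    intro a ha b hb s t hs ht hst e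
    have h1 := ha e; have h2 := hb e
    have : s * a e + t * b e ≤ 0 := by nlinarith
    simpa using this
  let D : Set (ι → ℝ) := convexHull ℝ T + O
  have hDclosed : IsClosed D := hOclosed.add_left_of_isCompact (hTfin.isCompact_convexHull ℝ)
  have hDconv : Convex ℝ D := ((convex_convexHull ℝ T).add hOconv)
  let p : ι → ℝ := fun e => x e / g e
  -- indicators of matchings lie in D
  have hindD : ∀ M ∈ Match, ind M ∈ D := by
    intro M hM
    have h1 : ind M ∈ convexHull ℝ T := subset_convexHull ℝ T ⟨M, hM, rfl⟩
    have h2 : (0 : ι → ℝ) ∈ O := fun e => le_refl 0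
    have := Set.add_mem_add h1 h2
    simpa using this
  -- Main step : p ∈ D, by separation
  have hpD : p ∈ D := by
    by_contra hp
    obtain ⟨f, u, hfu, hup⟩ := geometric_hahn_banach_closed_point hDconv hDclosed hp
    -- the coefficients of the functional f
    set Wbar : Finset α → ℝ := fun a => if h : a ∈ E then f (Pi.single (⟨a, h⟩ : ι) 1) else 0
      with hWbar
    have hWcoe : ∀ e : ι, f (Pi.single e 1) = Wbar (e : Finset α) := by
      rintro ⟨a, ha⟩; simp [hWbar, ha]
    -- f y = ∑ e, y e * Wbar e
    have hf : ∀ y : ι → ℝ, f y = ∑ e : ι, y e * Wbar (e : Finset α) := by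
      intro y
      have hy : y = ∑ e : ι, y e • (Pi.single e 1 : ι → ℝ) := by
        have := Finset.univ_sum_single y
        rw [← this]
        congr 1; funext e; funext j
        simp [Pi.single_apply, Finset.sum_ite_eq]
        by_cases h : j = e
        · simp only [h, if_true]
          exact ((Finset.sum_eq_single e (fun b _ hb => if_neg (Ne.symm hb))
            (fun h' => absurd (Finset.mem_univ e) h')).trans (if_pos rfl)).symm
        · simp [h]
      calc f y = f (∑ e : ι, y e • (Pi.single e 1 : ι → ℝ)) := by rw [← hy]
        _ = ∑ e : ι, y e * f ((Pi.single e 1 : ι → ℝ)) := by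
            rw [map_sum]; congr 1; funext e; rw [map_smul]; simp
        _ = ∑ e : ι, y e * Wbar (e : Finset α) := by
            congr 1; funext e; rw [hWcoe]
    -- nonnegativity of Wbar
    have hWnn : ∀ a ∈ E, 0 ≤ Wbar a := by
      intro a ha
      by_contra hneg
      push_neg at hneg
      set e : ι := ⟨a, ha⟩
      set t : ℝ := (|u| + 1) / (-Wbar a) with ht
      have htpos : 0 < t := div_pos (by positivity) (by linarith)
      have hmem : (-t) • (Pi.single e 1 : ι → ℝ) ∈ D := by
        have h1 : (0 : ι → ℝ) ∈ convexHull ℝ T := by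
          apply subset_convexHull ℝ T
          refine ⟨∅, hempty, ?_⟩
          funext j; simp [ind]
        have h2 : (-t) • (Pi.single e 1 : ι → ℝ) ∈ O := by
          intro j
          simp only [Pi.smul_apply, smul_eq_mul, Pi.single_apply]
          by_cases h : j = e <;> simp [h] <;> linarith
        have := Set.add_mem_add h1 h2
        simpa using this
      have hval : f ((-t) • (Pi.single e 1 : ι → ℝ)) = -t * Wbar a := by
        rw [map_smul]; rw [hWcoe e]; simp; exact Or.inl rfl
      have hlt := hfu _ hmem
      rw [hval] at hlt
      have hne : -Wbar a ≠ 0 := by linarith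
      have : -t * Wbar a = |u| + 1 := by
        have h' : -t * Wbar a = t * (-Wbar a) := by ring
        rw [h', ht, div_mul_cancel₀ _ hne]
      rw [this] at hlt
      have : u ≤ |u| := le_abs_self u
      linarith
    -- apply the algorithmic hypothesis
    obtain ⟨M, hME, hMmatch, hsum⟩ := halg (fun a => Wbar a / g a)
      (fun a ha => div_nonneg (hWnn a ha) (hgpos a ha).le)
    have hMmem : M ∈ Match := Finset.mem_filter.2 ⟨Finset.mem_powerset.2 hME, hMmatch⟩
    -- f p
    have hfp : f p = ∑ e ∈ E, Wbar e / g e * x e := by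
      rw [hf]
      rw [← Finset.sum_coe_sort E (fun a => Wbar a / g a * x a)]
      congr 1; funext e
      show x (e : Finset α) / g e * Wbar e = Wbar e / g e * x e
      ring
    -- f (ind M)
    have hfind : f (ind M) = ∑ e ∈ M, Wbar e := by
      rw [hf]
      have step : ∑ e : ι, ind M e * Wbar (e : Finset α)
          = ∑ e : ι, (fun a => if a ∈ M then Wbar a else 0) (e : Finset α) := by
        refine Finset.sum_congr rfl fun e _ => ?_
        simp [ind, ite_mul]
      rw [step, Finset.sum_coe_sort E (fun a => if a ∈ M then Wbar a else 0),
        Finset.sum_ite_mem, Finset.inter_eq_right.2 hME]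
    -- the RHS of hsum
    have hrhs : ∑ e ∈ M, g e * (Wbar e / g e) = ∑ e ∈ M, Wbar e := by
      refine Finset.sum_congr rfl (fun e he => ?_)
      rw [mul_div_cancel₀]
      exact (hgpos e (hME he)).ne'
    have h1 : f p ≤ f (ind M) := by
      rw [hfp, hfind]
      calc ∑ e ∈ E, Wbar e / g e * x e ≤ ∑ e ∈ M, g e * (Wbar e / g e) := hsum
        _ = ∑ e ∈ M, Wbar e := hrhs
    have h2 := hfu _ (hindD M hMmem)
    linarith
  -- extract the convex combination
  rw [Set.mem_add] at hpD
  obtain ⟨c, hc, zneg, hzneg, hczp⟩ := hpD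
  rw [_root_.convexHull_eq] at hc
  obtain ⟨ιT, t, wt, zt, hw0, hw1, hzT, hcm⟩ := hc
  have hcms : c = ∑ i ∈ t, wt i • zt i := by
    rw [← hcm, Finset.centerMass_eq_of_sum_1 _ _ hw1]
  -- choose matchings representing each point
  have hchoice : ∀ i : ιT, ∃ M : Finset (Finset α),
      M ∈ Match ∧ (i ∈ t → ind M = zt i) := by
    intro i
    by_cases h : i ∈ t
    · obtain ⟨M, hM, hMeq⟩ := hzT i h
      exact ⟨M, hM, fun _ => hMeq⟩
    · exact ⟨∅, hempty, fun h' => absurd h' h⟩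
  choose Mi hMimem hMieq using hchoice
  refine ⟨t.card, fun j => Mi ((t.equivFin.symm j) : ιT),
    fun j => wt ((t.equivFin.symm j) : ιT), ?_, ?_, ?_, ?_, ?_⟩
  · intro j; exact hMatch_sub _ (hMimem _)
  · intro j; exact hMatch_match _ (hMimem _)
  · intro j; exact hw0 _ (t.equivFin.symm j).2
  · rw [Equiv.sum_comp t.equivFin.symm (fun a : {i // i ∈ t} => wt ↑a)]
    rw [Finset.sum_coe_sort t wt]
    exact hw1
  · intro e he
    set ei : ι := ⟨e, he⟩ with hei
    have hple : p ei ≤ c ei := by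
      have : p ei = c ei + zneg ei := by rw [← hczp]; simp
      have h2 := hzneg ei
      linarith
    have hceval : c ei = ∑ i ∈ t, (if e ∈ Mi i then wt i else 0) := by
      rw [hcms]
      rw [Finset.sum_apply]
      refine Finset.sum_congr rfl (fun i hi => ?_)
      rw [Pi.smul_apply, smul_eq_mul, ← hMieq i hi]
      simp [ind, mul_ite]; rfl
    have hsum_eq : ∑ j : Fin t.card,
        (if e ∈ Mi ((t.equivFin.symm j) : ιT) then wt ((t.equivFin.symm j) : ιT) else 0)
        = ∑ i ∈ t, (if e ∈ Mi i then wt i else 0) := by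
      rw [Equiv.sum_comp t.equivFin.symm
        (fun a : {i // i ∈ t} => if e ∈ Mi ↑a then wt ↑a else 0)]
      exact Finset.sum_coe_sort t (fun i => if e ∈ Mi i then wt i else 0)
    rw [hsum_eq, ← hceval]
    exact hple
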